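/- Let n ≥ 1, 0 < β < n, 1 < p₁ < n/β, 1/p₂ = 1/p₁ − β/n, 0 < q < ∞, and let α, λ be reals with 0 < 2λ < α < n(1 − 1/p₂) − β. Assume there is C₀ > 0 with ‖I^β g‖_{L^{p₂}} ≤ C₀ ‖g‖_{L^{p₁}} for every g ∈ L^{p₁}(ℝⁿ). Then there is a constant C, depending only on n, β, p₁, q, α, λ and C₀, such that for every j ∈ ℤ and every measurable a : ℝⁿ → ℝ supported in B_j = {x : |x| ≤ 2^j} with ‖a‖_{L^{p₁}} ≤ 2^{−jα}, one has sup_{L∈ℤ} 2^{−Lλ} ( ∑_{k ≤ L} 2^{kαq} ‖(I^β a)·χ_{F_k}‖_{L^{p₂}}^{q} )^{1/q} ≤ C · 2^{−jλ}. -/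

import Mathlib

open MeasureTheory
open scoped ENNReal

/-- The Riesz potential `I^β f (x) = ∫ f(y) ‖x - y‖^(β - n) dy` on `ℝⁿ`. -/
noncomputable def rieszPot (n : ℕ) (β : ℝ) (f : EuclideanSpace ℝ (Fin n) → ℝ)
    (x : EuclideanSpace ℝ (Fin n)) : ℝ :=
  ∫ y, f y * ‖x - y‖ ^ (β - (n : ℝ))

/-- The dyadic annulus `F_k = B_k \ B_{k-1}`, where `B_k` is the closed ball of
radius `2^k` centred at the origin. -/
def annulus (n : ℕ) (k : ℤ) : Set (EuclideanSpace ℝ (Fin n)) :=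
  Metric.closedBall 0 ((2 : ℝ) ^ k) \ Metric.closedBall 0 ((2 : ℝ) ^ (k - 1))

lemma two_rpow_mul' (x y : ℝ) :
    ENNReal.ofReal ((2:ℝ)^x) * ENNReal.ofReal ((2:ℝ)^y) = ENNReal.ofReal ((2:ℝ)^(x+y)) := by
  rw [← ENNReal.ofReal_mul (by positivity), ← Real.rpow_add two_pos]

lemma two_rpow_le' {x y : ℝ} (h : x ≤ y) :
    ENNReal.ofReal ((2:ℝ)^x) ≤ ENNReal.ofReal ((2:ℝ)^y) :=
  ENNReal.ofReal_le_ofReal (Real.rpow_le_rpow_of_exponent_le one_le_two h)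

lemma two_rpow_rpow' (x e : ℝ) :
    (ENNReal.ofReal ((2:ℝ)^x)) ^ e = ENNReal.ofReal ((2:ℝ)^(x*e)) := by
  rw [ENNReal.ofReal_rpow_of_pos (by positivity), ← Real.rpow_mul (by norm_num)]

lemma geom_sum_int' (L : ℤ) (s : ℝ) :
    ∑' k : {k : ℤ // k ≤ L}, ENNReal.ofReal ((2:ℝ) ^ ((k.1:ℝ) * s)) =
      ENNReal.ofReal ((2:ℝ)^((L:ℝ)*s)) * (1 - ENNReal.ofReal ((2:ℝ)^(-s)))⁻¹ := by
  let e : ℕ ≃ {k : ℤ // k ≤ L} :=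
    { toFun := fun m => ⟨L - m, by omega⟩
      invFun := fun k => (L - k.1).toNat
      left_inv := fun m => by simp
      right_inv := fun k => by
        apply Subtype.ext
        have := k.2
        simp
        omega }
  rw [← e.tsum_eq]
  have hterm : ∀ m : ℕ, ENNReal.ofReal ((2:ℝ) ^ (((e m).1 : ℝ) * s)) =
      ENNReal.ofReal ((2:ℝ)^((L:ℝ)*s)) * (ENNReal.ofReal ((2:ℝ)^(-s)))^m := by
    intro m
    have h1 : ((e m).1 : ℝ) = (L : ℝ) - m := by
      have h0 : ((e m).1 : ℤ) = L - m := rfl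
      rw [h0]; push_cast; ring
    rw [h1, ← ENNReal.ofReal_pow (by positivity), ← ENNReal.ofReal_mul (by positivity)]
    congr 1
    rw [← Real.rpow_natCast ((2:ℝ)^(-s)) m, ← Real.rpow_mul (by norm_num),
      ← Real.rpow_add two_pos]
    ring_nf
  calc ∑' m : ℕ, ENNReal.ofReal ((2:ℝ) ^ (((e m).1 : ℝ) * s))
      = ∑' m : ℕ, ENNReal.ofReal ((2:ℝ)^((L:ℝ)*s)) * (ENNReal.ofReal ((2:ℝ)^(-s)))^m :=
        tsum_congr hterm
    _ = ENNReal.ofReal ((2:ℝ)^((L:ℝ)*s)) * ∑' m : ℕ, (ENNReal.ofReal ((2:ℝ)^(-s)))^m :=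
        ENNReal.tsum_mul_left
    _ = _ := by rw [ENNReal.tsum_geometric]

lemma geom_G_ne_top' (s : ℝ) (hs : 0 < s) :
    (1 - ENNReal.ofReal ((2:ℝ)^(-s)))⁻¹ ≠ ∞ := by
  rw [Ne, ENNReal.inv_eq_top, tsub_eq_zero_iff_le, ← ENNReal.ofReal_one]
  intro h
  have h1 := ENNReal.ofReal_le_ofReal_iff (by positivity) |>.mp h
  have h2 : (2:ℝ)^(-s) < 1 := Real.rpow_lt_one_of_one_lt_of_neg one_lt_two (by linarith)
  linarith

/-- for a central atom `a` supported in `B_j` with `‖a‖_{L^{p₁}} ≤ 2^{-jα}`,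
the Herz–Morrey norm of `I^β a` is bounded by `C 2^{-jλ}`. -/
theorem stmt_7 (n : ℕ) (hn : 1 ≤ n) (β p₁ p₂ q α lam : ℝ)
    (hβ0 : 0 < β) (hβn : β < n) (hp₁ : 1 < p₁) (hp₁n : p₁ < n / β)
    (hp₂ : 1 / p₂ = 1 / p₁ - β / n) (hq : 0 < q)
    (hlam : 0 < lam) (h2lam : 2 * lam < α) (hα : α < n * (1 - 1 / p₂) - β)
    (C₀ : ℝ) (hC₀ : 0 < C₀)
    (hbound : ∀ g : EuclideanSpace ℝ (Fin n) → ℝ, MemLp g (ENNReal.ofReal p₁) volume →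
      eLpNorm (rieszPot n β g) (ENNReal.ofReal p₂) volume ≤
        ENNReal.ofReal C₀ * eLpNorm g (ENNReal.ofReal p₁) volume) :
    ∃ C : ℝ, 0 < C ∧
      ∀ (j : ℤ) (a : EuclideanSpace ℝ (Fin n) → ℝ),
        Measurable a →
        Function.support a ⊆ Metric.closedBall 0 ((2 : ℝ) ^ j) →
        eLpNorm a (ENNReal.ofReal p₁) volume ≤ ENNReal.ofReal ((2 : ℝ) ^ (-(j : ℝ) * α)) →
        (⨆ L : ℤ, ENNReal.ofReal ((2 : ℝ) ^ (-(L : ℝ) * lam)) *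
            (∑' k : {k : ℤ // k ≤ L},
                ENNReal.ofReal ((2 : ℝ) ^ ((k.1 : ℝ) * α * q)) *
                  eLpNorm ((annulus n k.1).indicator (rieszPot n β a))
                      (ENNReal.ofReal p₂) volume ^ q) ^ (1 / q)) ≤
          ENNReal.ofReal (C * (2 : ℝ) ^ (-(j : ℝ) * lam)) := by
  -- basic numeric facts
  have hn0 : (0:ℝ) < n := by exact_mod_cast Nat.pos_of_ne_zero (by omega)
  have hp₁0 : (0:ℝ) < p₁ := zero_lt_one.trans hp₁
  have hβp₁n : p₁ * β < n := (lt_div_iff₀ hβ0).mp hp₁n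
  have hinvp₂pos : 0 < 1/p₂ := by
    rw [hp₂, sub_pos]
    exact (div_lt_div_iff₀ hn0 hp₁0).mpr (by nlinarith)
  have hp₂0 : (0:ℝ) < p₂ := one_div_pos.mp hinvp₂pos
  have hp₁toReal : (ENNReal.ofReal p₁).toReal = p₁ := ENNReal.toReal_ofReal hp₁0.le
  have hp₂toReal : (ENNReal.ofReal p₂).toReal = p₂ := ENNReal.toReal_ofReal hp₂0.le
  have hP₂0 : ENNReal.ofReal p₂ ≠ 0 := (ENNReal.ofReal_pos.mpr hp₂0).ne'
  have hP₂top : ENNReal.ofReal p₂ ≠ ∞ := ENNReal.ofReal_ne_top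
  have hαlam : lam < α := by linarith
  have he₁ : (0:ℝ) ≤ 1 - 1/p₁ := by
    have : 1/p₁ < 1 := by rw [div_lt_one hp₁0]; exact hp₁
    linarith
  have he₂ : (0:ℝ) ≤ 1/p₂ := hinvp₂pos.le
  have hδkey : (n:ℝ) * (1/p₂) = n * (1/p₁) - β := by
    rw [hp₂, mul_sub, mul_comm ((n:ℝ)) (β/n), div_mul_cancel₀ β hn0.ne']
  have hδ : α + β - n + n * (1/p₂) < 0 := by
    have hexp : (n:ℝ) * (1 - 1/p₂) = n - n * (1/p₂) := by ring
    rw [hexp] at hα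
    linarith
  -- constants
  set κ : ℝ≥0∞ := volume (Metric.ball (0 : EuclideanSpace ℝ (Fin n)) 1) with hκdef
  have hκtop : κ ≠ ∞ := measure_ball_lt_top.ne
  have hvol : ∀ m : ℤ, volume (Metric.closedBall (0 : EuclideanSpace ℝ (Fin n)) ((2:ℝ)^m)) =
      ENNReal.ofReal ((2:ℝ)^((m:ℝ)*n)) * κ := by
    intro m
    rw [Measure.addHaar_closedBall _ _ (by positivity)]
    congr 2
    rw [finrank_euclideanSpace_fin, ← Real.rpow_intCast 2 m, ← Real.rpow_natCast _ n,
      ← Real.rpow_mul (by norm_num)]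
  set K₁ : ℝ≥0∞ := ENNReal.ofReal (C₀ * (2:ℝ)^(α - lam)) +
      κ^(1 - 1/p₁) * κ^(1/p₂) * ENNReal.ofReal ((2:ℝ)^(2*((n:ℝ) - β))) with hK₁def
  have hK₁top : K₁ ≠ ∞ := by
    apply ENNReal.add_ne_top.mpr
    constructor
    · exact ENNReal.ofReal_ne_top
    · exact ENNReal.mul_ne_top (ENNReal.mul_ne_top (ENNReal.rpow_ne_top_of_nonneg he₁ hκtop)
        (ENNReal.rpow_ne_top_of_nonneg he₂ hκtop)) ENNReal.ofReal_ne_top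
  set G : ℝ≥0∞ := (1 - ENNReal.ofReal ((2:ℝ)^(-(lam*q))))⁻¹ with hGdef
  have hGtop : G ≠ ∞ := geom_G_ne_top' (lam*q) (by positivity)
  set K : ℝ≥0∞ := K₁ * G^(1/q) with hKdef
  have hKtop : K ≠ ∞ :=
    ENNReal.mul_ne_top hK₁top (ENNReal.rpow_ne_top_of_nonneg (by positivity) hGtop)
  refine ⟨K.toReal + 1, by positivity, ?_⟩
  have hKC : K ≤ ENNReal.ofReal (K.toReal + 1) := by
    conv_lhs => rw [← ENNReal.ofReal_toReal hKtop]
    exact ENNReal.ofReal_le_ofReal (by linarith)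
  intro j a hmeas hsupp ha
  have hmem : MemLp a (ENNReal.ofReal p₁) volume :=
    ⟨hmeas.aestronglyMeasurable, lt_of_le_of_lt ha ENNReal.ofReal_lt_top⟩
  have hint : Integrable a volume := by
    refine memLp_one_iff_integrable.mp <|
      hmem.mono_exponent_of_measure_support_ne_top
        (s := Metric.closedBall 0 ((2:ℝ)^j)) ?_ measure_closedBall_lt_top.ne ?_
    · intro x hx
      by_contra h
      exact hx (hsupp (Function.mem_support.mpr h))
    · rw [← ENNReal.ofReal_one]
      exact ENNReal.ofReal_le_ofReal hp₁.le
  set I₁ : ℝ := ∫ y, ‖a y‖ with hI₁def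
  have hI₁0 : 0 ≤ I₁ := integral_nonneg fun y => norm_nonneg _
  -- Hölder bound for the L¹ norm
  have hI₁ : ENNReal.ofReal I₁ ≤ ENNReal.ofReal ((2:ℝ)^(-(j:ℝ)*α)) *
      (ENNReal.ofReal ((2:ℝ)^((j:ℝ)*n)) * κ) ^ (1 - 1/p₁) := by
    have hI₁eq : ENNReal.ofReal I₁ = eLpNorm a 1 volume := by
      rw [eLpNorm_one_eq_lintegral_enorm, hI₁def,
        ofReal_integral_norm_eq_lintegral_enorm hint]
    have hrestrict : eLpNorm a 1 volume =
        eLpNorm a 1 (volume.restrict (Metric.closedBall 0 ((2:ℝ)^j))) := by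
      conv_lhs => rw [← Set.indicator_eq_self.2 hsupp]
      exact eLpNorm_indicator_eq_eLpNorm_restrict Metric.isClosed_closedBall.measurableSet
    have hexp : 1/(1:ℝ≥0∞).toReal - 1/(ENNReal.ofReal p₁).toReal = 1 - 1/p₁ := by
      rw [ENNReal.toReal_one, hp₁toReal]; norm_num
    have hholder := eLpNorm_le_eLpNorm_mul_rpow_measure_univ (p := 1)
      (q := ENNReal.ofReal p₁) (μ := volume.restrict (Metric.closedBall 0 ((2:ℝ)^j)))
      (by rw [← ENNReal.ofReal_one]; exact ENNReal.ofReal_le_ofReal hp₁.le)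
      hmeas.aestronglyMeasurable.restrict
    rw [Measure.restrict_apply_univ, hexp] at hholder
    calc ENNReal.ofReal I₁ = eLpNorm a 1 (volume.restrict (Metric.closedBall 0 ((2:ℝ)^j))) := by
          rw [hI₁eq, hrestrict]
      _ ≤ eLpNorm a (ENNReal.ofReal p₁) (volume.restrict (Metric.closedBall 0 ((2:ℝ)^j))) *
            volume (Metric.closedBall 0 ((2:ℝ)^j)) ^ (1 - 1/p₁) := hholder
      _ ≤ eLpNorm a (ENNReal.ofReal p₁) volume *
            volume (Metric.closedBall 0 ((2:ℝ)^j)) ^ (1 - 1/p₁) :=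
          mul_le_mul_left (eLpNorm_mono_measure a Measure.restrict_le_self) _
      _ ≤ ENNReal.ofReal ((2:ℝ)^(-(j:ℝ)*α)) *
            volume (Metric.closedBall 0 ((2:ℝ)^j)) ^ (1 - 1/p₁) := mul_le_mul_left ha _
      _ = _ := by rw [hvol j]
  -- the main per-annulus claim
  have main : ∀ k : ℤ, ENNReal.ofReal ((2:ℝ)^((k:ℝ)*α)) *
      eLpNorm ((annulus n k).indicator (rieszPot n β a)) (ENNReal.ofReal p₂) volume ≤
      K₁ * ENNReal.ofReal ((2:ℝ)^(((k:ℝ)-(j:ℝ))*lam)) := by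
    intro k
    have hann : MeasurableSet (annulus n k) := by
      unfold annulus
      exact Metric.isClosed_closedBall.measurableSet.diff Metric.isClosed_closedBall.measurableSet
    rcases le_or_gt k (j+1) with hk | hk
    · -- small k : use the boundedness hypothesis
      have hkr : (k:ℝ) ≤ (j:ℝ) + 1 := by exact_mod_cast hk
      have hNk : eLpNorm ((annulus n k).indicator (rieszPot n β a)) (ENNReal.ofReal p₂) volume ≤
          ENNReal.ofReal C₀ * ENNReal.ofReal ((2:ℝ)^(-(j:ℝ)*α)) := by
        calc eLpNorm ((annulus n k).indicator (rieszPot n β a)) (ENNReal.ofReal p₂) volume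
            ≤ eLpNorm (rieszPot n β a) (ENNReal.ofReal p₂) volume := eLpNorm_indicator_le _
          _ ≤ ENNReal.ofReal C₀ * eLpNorm a (ENNReal.ofReal p₁) volume := hbound a hmem
          _ ≤ ENNReal.ofReal C₀ * ENNReal.ofReal ((2:ℝ)^(-(j:ℝ)*α)) := mul_le_mul_right ha _
      have hexp1 : (k:ℝ)*α + (-(j:ℝ)*α) ≤ (α - lam) + (((k:ℝ)-(j:ℝ))*lam) := by
        nlinarith [mul_nonneg (by linarith : (0:ℝ) ≤ 1 - ((k:ℝ) - (j:ℝ))) (by linarith : (0:ℝ) ≤ α - lam)]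
      calc ENNReal.ofReal ((2:ℝ)^((k:ℝ)*α)) *
            eLpNorm ((annulus n k).indicator (rieszPot n β a)) (ENNReal.ofReal p₂) volume
          ≤ ENNReal.ofReal ((2:ℝ)^((k:ℝ)*α)) *
            (ENNReal.ofReal C₀ * ENNReal.ofReal ((2:ℝ)^(-(j:ℝ)*α))) := mul_le_mul_right hNk _
        _ = ENNReal.ofReal C₀ * ENNReal.ofReal ((2:ℝ)^((k:ℝ)*α + (-(j:ℝ)*α))) := by
            rw [← two_rpow_mul']; ring
        _ ≤ ENNReal.ofReal C₀ * ENNReal.ofReal ((2:ℝ)^((α - lam) + (((k:ℝ)-(j:ℝ))*lam))) :=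
            mul_le_mul_right (two_rpow_le' hexp1) _
        _ = ENNReal.ofReal (C₀ * (2:ℝ)^(α - lam)) * ENNReal.ofReal ((2:ℝ)^(((k:ℝ)-(j:ℝ))*lam)) := by
            rw [← two_rpow_mul', ENNReal.ofReal_mul hC₀.le]; ring
        _ ≤ K₁ * ENNReal.ofReal ((2:ℝ)^(((k:ℝ)-(j:ℝ))*lam)) :=
            mul_le_mul_left le_self_add _
    · -- large k : pointwise estimate
      have hk2 : j + 2 ≤ k := by omega
      have hkr : (j:ℝ) + 2 ≤ (k:ℝ) := by exact_mod_cast hk2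
      set R : ℝ := (2:ℝ)^(((k:ℝ)-2)*(β-n)) with hRdef
      have hR0 : 0 ≤ R := by positivity
      -- pointwise bound on the annulus
      have hpt : ∀ x ∈ annulus n k, ‖rieszPot n β a x‖ ≤ R * I₁ := by
        intro x hx
        have hxnorm : (2:ℝ)^((k:ℝ)-1) < ‖x‖ := by
          have h2 := hx.2
          rw [Metric.mem_closedBall, dist_zero_right, not_le] at h2
          calc (2:ℝ)^((k:ℝ)-1) = (2:ℝ)^(((k-1:ℤ)):ℝ) := by push_cast; ring_nf
            _ = (2:ℝ)^(k-1:ℤ) := Real.rpow_intCast 2 (k-1)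
            _ < ‖x‖ := h2
        have hw : ∀ y, ‖a y * ‖x - y‖ ^ (β - (n:ℝ))‖ ≤ R * ‖a y‖ := by
          intro y
          by_cases hy : a y = 0
          · simp [hy]
          · have hyB : ‖y‖ ≤ (2:ℝ)^((j:ℝ)) := by
              have hmem' := hsupp (Function.mem_support.mpr hy)
              rw [Metric.mem_closedBall, dist_zero_right] at hmem'
              calc ‖y‖ ≤ (2:ℝ)^(j:ℤ) := hmem'
                _ = (2:ℝ)^((j:ℝ)) := (Real.rpow_intCast 2 j).symm
            have hyk : (2:ℝ)^((j:ℝ)) ≤ (2:ℝ)^((k:ℝ)-2) :=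
              Real.rpow_le_rpow_of_exponent_le one_le_two (by linarith)
            have hdist : (2:ℝ)^((k:ℝ)-2) ≤ ‖x - y‖ := by
              have h1 : ‖x‖ - ‖y‖ ≤ ‖x - y‖ := norm_sub_norm_le x y
              have h2 : (2:ℝ)^((k:ℝ)-1) = 2 * (2:ℝ)^((k:ℝ)-2) := by
                rw [show (k:ℝ)-1 = 1 + ((k:ℝ)-2) by ring, Real.rpow_add two_pos, Real.rpow_one]
              linarith
            have hwle : ‖x - y‖ ^ (β - (n:ℝ)) ≤ R := by
              rw [hRdef, Real.rpow_mul (by norm_num : (0:ℝ) ≤ 2)]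
              exact Real.rpow_le_rpow_of_nonpos (by positivity) hdist (by linarith)
            calc ‖a y * ‖x - y‖ ^ (β - (n:ℝ))‖
                = ‖a y‖ * ‖x - y‖ ^ (β - (n:ℝ)) := by
                  rw [norm_mul, Real.norm_eq_abs (‖x - y‖ ^ (β - (n:ℝ))),
                    abs_of_nonneg (Real.rpow_nonneg (norm_nonneg _) _)]
              _ ≤ ‖a y‖ * R := mul_le_mul_of_nonneg_left hwle (norm_nonneg _)
              _ = R * ‖a y‖ := mul_comm _ _
        calc ‖rieszPot n β a x‖ ≤ ∫ y, ‖a y * ‖x - y‖ ^ (β - (n:ℝ))‖ :=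
            norm_integral_le_integral_norm _
          _ ≤ ∫ y, R * ‖a y‖ :=
            integral_mono_of_nonneg (ae_of_all _ fun y => norm_nonneg _)
              (hint.norm.const_mul R) (ae_of_all _ hw)
          _ = R * I₁ := by rw [integral_const_mul, hI₁def]
      have hRI : 0 ≤ R * I₁ := mul_nonneg hR0 hI₁0
      have hptind : ∀ x, ‖(annulus n k).indicator (rieszPot n β a) x‖ ≤
          ‖(annulus n k).indicator (fun _ => R * I₁) x‖ := by
        intro x
        by_cases hx : x ∈ annulus n k
        · rw [Set.indicator_of_mem hx, Set.indicator_of_mem hx,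
            Real.norm_eq_abs (R * I₁), abs_of_nonneg hRI]
          exact hpt x hx
        · simp [Set.indicator_of_notMem hx]
      have hNk : eLpNorm ((annulus n k).indicator (rieszPot n β a)) (ENNReal.ofReal p₂) volume ≤
          ENNReal.ofReal (R * I₁) *
            (ENNReal.ofReal ((2:ℝ)^((k:ℝ)*n)) * κ) ^ (1/p₂) := by
        calc eLpNorm ((annulus n k).indicator (rieszPot n β a)) (ENNReal.ofReal p₂) volume
            ≤ eLpNorm ((annulus n k).indicator (fun _ => R * I₁)) (ENNReal.ofReal p₂) volume :=
              eLpNorm_mono hptind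
          _ = ‖R * I₁‖₊ * volume (annulus n k) ^ (1/(ENNReal.ofReal p₂).toReal) :=
              eLpNorm_indicator_const hann hP₂0 hP₂top
          _ ≤ ENNReal.ofReal (R * I₁) *
              volume (Metric.closedBall (0 : EuclideanSpace ℝ (Fin n)) ((2:ℝ)^k)) ^ (1/p₂) := by
              rw [hp₂toReal, ← enorm_eq_nnnorm, Real.enorm_eq_ofReal hRI]
              exact mul_le_mul_right
                (ENNReal.rpow_le_rpow (measure_mono Set.diff_subset) he₂) _
          _ = _ := by rw [hvol k]
      have hexp2 : (((k:ℝ)*α + ((k:ℝ)-2)*(β-n)) + (-(j:ℝ)*α) + ((j:ℝ)*n*(1-1/p₁))) +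
          ((k:ℝ)*n*(1/p₂)) ≤ 2*((n:ℝ)-β) + (((k:ℝ)-(j:ℝ))*lam) := by
        have h1 : (((k:ℝ)*α + ((k:ℝ)-2)*(β-n)) + (-(j:ℝ)*α) + ((j:ℝ)*n*(1-1/p₁))) +
            ((k:ℝ)*n*(1/p₂)) =
            ((k:ℝ)-(j:ℝ))*(α + β - n + n*(1/p₂)) + 2*((n:ℝ)-β) := by
          linear_combination (j:ℝ) * hδkey
        rw [h1]
        have h2 : ((k:ℝ)-(j:ℝ))*(α + β - n + n*(1/p₂)) ≤ ((k:ℝ)-(j:ℝ))*lam :=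
          mul_le_mul_of_nonneg_left (by linarith) (by linarith)
        linarith
      calc ENNReal.ofReal ((2:ℝ)^((k:ℝ)*α)) *
            eLpNorm ((annulus n k).indicator (rieszPot n β a)) (ENNReal.ofReal p₂) volume
          ≤ ENNReal.ofReal ((2:ℝ)^((k:ℝ)*α)) * (ENNReal.ofReal (R * I₁) *
              (ENNReal.ofReal ((2:ℝ)^((k:ℝ)*n)) * κ) ^ (1/p₂)) := mul_le_mul_right hNk _
        _ = ENNReal.ofReal ((2:ℝ)^((k:ℝ)*α)) * ((ENNReal.ofReal R * ENNReal.ofReal I₁) *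
              (ENNReal.ofReal ((2:ℝ)^((k:ℝ)*n)) * κ) ^ (1/p₂)) := by
            rw [ENNReal.ofReal_mul hR0]
        _ ≤ ENNReal.ofReal ((2:ℝ)^((k:ℝ)*α)) * ((ENNReal.ofReal R *
              (ENNReal.ofReal ((2:ℝ)^(-(j:ℝ)*α)) *
                (ENNReal.ofReal ((2:ℝ)^((j:ℝ)*n)) * κ) ^ (1 - 1/p₁))) *
              (ENNReal.ofReal ((2:ℝ)^((k:ℝ)*n)) * κ) ^ (1/p₂)) := by
            exact mul_le_mul_right (mul_le_mul_left (mul_le_mul_right hI₁ _) _) _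
        _ = ((((ENNReal.ofReal ((2:ℝ)^((k:ℝ)*α)) * ENNReal.ofReal R) *
              ENNReal.ofReal ((2:ℝ)^(-(j:ℝ)*α))) *
              ENNReal.ofReal ((2:ℝ)^((j:ℝ)*n*(1-1/p₁)))) *
              ENNReal.ofReal ((2:ℝ)^((k:ℝ)*n*(1/p₂)))) * (κ^(1-1/p₁) * κ^(1/p₂)) := by
            rw [ENNReal.mul_rpow_of_nonneg _ _ he₁, ENNReal.mul_rpow_of_nonneg _ _ he₂,
              two_rpow_rpow', two_rpow_rpow']
            ring
        _ = ENNReal.ofReal ((2:ℝ)^((((k:ℝ)*α + ((k:ℝ)-2)*(β-n)) + (-(j:ℝ)*α) +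
              ((j:ℝ)*n*(1-1/p₁))) + ((k:ℝ)*n*(1/p₂)))) * (κ^(1-1/p₁) * κ^(1/p₂)) := by
            rw [hRdef, two_rpow_mul', two_rpow_mul', two_rpow_mul', two_rpow_mul']
        _ ≤ ENNReal.ofReal ((2:ℝ)^(2*((n:ℝ)-β) + (((k:ℝ)-(j:ℝ))*lam))) *
              (κ^(1-1/p₁) * κ^(1/p₂)) := mul_le_mul_left (two_rpow_le' hexp2) _
        _ = (κ^(1-1/p₁) * κ^(1/p₂) * ENNReal.ofReal ((2:ℝ)^(2*((n:ℝ)-β)))) *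
              ENNReal.ofReal ((2:ℝ)^(((k:ℝ)-(j:ℝ))*lam)) := by
            rw [← two_rpow_mul']; ring
        _ ≤ K₁ * ENNReal.ofReal ((2:ℝ)^(((k:ℝ)-(j:ℝ))*lam)) :=
            mul_le_mul_left le_add_self _
  -- now sum up
  apply iSup_le
  intro L
  have hterm : ∀ k : {k : ℤ // k ≤ L},
      ENNReal.ofReal ((2:ℝ)^((k.1:ℝ)*α*q)) *
        eLpNorm ((annulus n k.1).indicator (rieszPot n β a)) (ENNReal.ofReal p₂) volume ^ q ≤
      K₁^q * (ENNReal.ofReal ((2:ℝ)^(-(j:ℝ)*(lam*q))) *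
        ENNReal.ofReal ((2:ℝ)^((k.1:ℝ)*(lam*q)))) := by
    intro k
    calc ENNReal.ofReal ((2:ℝ)^((k.1:ℝ)*α*q)) *
          eLpNorm ((annulus n k.1).indicator (rieszPot n β a)) (ENNReal.ofReal p₂) volume ^ q
        = (ENNReal.ofReal ((2:ℝ)^((k.1:ℝ)*α)) *
            eLpNorm ((annulus n k.1).indicator (rieszPot n β a)) (ENNReal.ofReal p₂) volume) ^ q := by
          rw [ENNReal.mul_rpow_of_nonneg _ _ hq.le, two_rpow_rpow']
      _ ≤ (K₁ * ENNReal.ofReal ((2:ℝ)^(((k.1:ℝ)-(j:ℝ))*lam))) ^ q :=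
          ENNReal.rpow_le_rpow (main k.1) hq.le
      _ = K₁^q * ENNReal.ofReal ((2:ℝ)^((((k.1:ℝ)-(j:ℝ))*lam)*q)) := by
          rw [ENNReal.mul_rpow_of_nonneg _ _ hq.le, two_rpow_rpow']
      _ = K₁^q * (ENNReal.ofReal ((2:ℝ)^(-(j:ℝ)*(lam*q))) *
            ENNReal.ofReal ((2:ℝ)^((k.1:ℝ)*(lam*q)))) := by
          rw [two_rpow_mul', show (-(j:ℝ)*(lam*q)) + ((k.1:ℝ)*(lam*q)) =
            (((k.1:ℝ)-(j:ℝ))*lam)*q by ring]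
  have hsum : (∑' k : {k : ℤ // k ≤ L},
      ENNReal.ofReal ((2:ℝ)^((k.1:ℝ)*α*q)) *
        eLpNorm ((annulus n k.1).indicator (rieszPot n β a)) (ENNReal.ofReal p₂) volume ^ q) ≤
      K₁^q * (ENNReal.ofReal ((2:ℝ)^(-(j:ℝ)*(lam*q))) *
        (ENNReal.ofReal ((2:ℝ)^((L:ℝ)*(lam*q))) * G)) := by
    calc (∑' k : {k : ℤ // k ≤ L},
        ENNReal.ofReal ((2:ℝ)^((k.1:ℝ)*α*q)) *
          eLpNorm ((annulus n k.1).indicator (rieszPot n β a)) (ENNReal.ofReal p₂) volume ^ q)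
        ≤ ∑' k : {k : ℤ // k ≤ L}, K₁^q * (ENNReal.ofReal ((2:ℝ)^(-(j:ℝ)*(lam*q))) *
            ENNReal.ofReal ((2:ℝ)^((k.1:ℝ)*(lam*q)))) := ENNReal.tsum_le_tsum hterm
      _ = K₁^q * (ENNReal.ofReal ((2:ℝ)^(-(j:ℝ)*(lam*q))) *
            ∑' k : {k : ℤ // k ≤ L}, ENNReal.ofReal ((2:ℝ)^((k.1:ℝ)*(lam*q)))) := by
          rw [ENNReal.tsum_mul_left, ENNReal.tsum_mul_left]
      _ = _ := by rw [geom_sum_int' L (lam*q)]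
  have hq' : (0:ℝ) ≤ 1/q := by positivity
  calc ENNReal.ofReal ((2:ℝ)^(-(L:ℝ)*lam)) *
        (∑' k : {k : ℤ // k ≤ L},
          ENNReal.ofReal ((2:ℝ)^((k.1:ℝ)*α*q)) *
            eLpNorm ((annulus n k.1).indicator (rieszPot n β a)) (ENNReal.ofReal p₂) volume ^ q) ^ (1/q)
      ≤ ENNReal.ofReal ((2:ℝ)^(-(L:ℝ)*lam)) *
        (K₁^q * (ENNReal.ofReal ((2:ℝ)^(-(j:ℝ)*(lam*q))) *
          (ENNReal.ofReal ((2:ℝ)^((L:ℝ)*(lam*q))) * G))) ^ (1/q) :=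
        mul_le_mul_right (ENNReal.rpow_le_rpow hsum hq') _
    _ = ENNReal.ofReal ((2:ℝ)^(-(L:ℝ)*lam)) *
        (K₁ * (ENNReal.ofReal ((2:ℝ)^(-(j:ℝ)*lam)) *
          (ENNReal.ofReal ((2:ℝ)^((L:ℝ)*lam)) * G^(1/q)))) := by
        rw [ENNReal.mul_rpow_of_nonneg _ _ hq', ENNReal.mul_rpow_of_nonneg _ _ hq',
          ENNReal.mul_rpow_of_nonneg _ _ hq', ← ENNReal.rpow_mul,
          mul_one_div_cancel hq.ne', ENNReal.rpow_one, two_rpow_rpow', two_rpow_rpow',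
          show (-(j:ℝ)*(lam*q))*(1/q) = -(j:ℝ)*lam by field_simp,
          show ((L:ℝ)*(lam*q))*(1/q) = (L:ℝ)*lam by field_simp]
    _ = (K₁ * G^(1/q)) * (ENNReal.ofReal ((2:ℝ)^(-(L:ℝ)*lam)) *
          ENNReal.ofReal ((2:ℝ)^((L:ℝ)*lam))) * ENNReal.ofReal ((2:ℝ)^(-(j:ℝ)*lam)) := by
        ring
    _ = K * ENNReal.ofReal ((2:ℝ)^(-(j:ℝ)*lam)) := by
        rw [two_rpow_mul', show -(L:ℝ)*lam + (L:ℝ)*lam = 0 by ring, Real.rpow_zero,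
          ENNReal.ofReal_one, mul_one, hKdef]
    _ ≤ ENNReal.ofReal (K.toReal + 1) * ENNReal.ofReal ((2:ℝ)^(-(j:ℝ)*lam)) :=
        mul_le_mul_left hKC _
    _ = ENNReal.ofReal ((K.toReal + 1) * (2:ℝ)^(-(j:ℝ)*lam)) :=
        (ENNReal.ofReal_mul (by positivity)).symm
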